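/- Milnor's example: the even unimodular lattices E₈ ⊕ E₈ and E₁₆ in ℝ¹⁶ have the same theta series, i.e., for every even integer 2k, the number of vectors of norm 2k in E₈ ⊕ E₈ equals the number of vectors of norm 2k in E₁₆. -/

import Mathlib

/-- The E₈-condition on a block `S` of coordinates: all coordinates in `S` are integers,
or all are half-integers, and the coordinate sum over `S` is an even integer. -/
def IsE8Block (x : EuclideanSpace ℝ (Fin 16)) (S : Finset (Fin 16)) : Prop :=
  ((∀ i ∈ S, ∃ m : ℤ, x i = (m : ℝ)) ∨ (∀ i ∈ S, ∃ m : ℤ, x i = (m : ℝ) + 1/2)) ∧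
    ∃ m : ℤ, ∑ i ∈ S, x i = 2 * (m : ℝ)

/-- The lattice `E₈ ⊕ E₈` in `ℝ¹⁶`. -/
def E8E8Set : Set (EuclideanSpace ℝ (Fin 16)) :=
  {x | IsE8Block x (Finset.univ.filter fun i => (i : ℕ) < 8) ∧
       IsE8Block x (Finset.univ.filter fun i => 8 ≤ (i : ℕ))}

/-- The lattice `E₁₆ = D₁₆⁺` in `ℝ¹⁶`. -/
def E16Set : Set (EuclideanSpace ℝ (Fin 16)) :=
  {x | ((∀ i, ∃ m : ℤ, x i = (m : ℝ)) ∨ (∀ i, ∃ m : ℤ, x i = (m : ℝ) + 1/2)) ∧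
       ∃ m : ℤ, ∑ i, x i = 2 * (m : ℝ)}

abbrev V4 := Fin 4 → ℝ

def q4 {α : Type*} (a b c d : α) : Fin 4 → α :=
  fun i => if i.val = 0 then a else if i.val = 1 then b else if i.val = 2 then c else d
@[simp] lemma q4_0 {α : Type*} (a b c d : α) : q4 a b c d 0 = a := rfl
@[simp] lemma q4_1 {α : Type*} (a b c d : α) : q4 a b c d 1 = b := rfl
@[simp] lemma q4_2 {α : Type*} (a b c d : α) : q4 a b c d 2 = c := rfl
@[simp] lemma q4_3 {α : Type*} (a b c d : α) : q4 a b c d 3 = d := rfl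

lemma q4_eta {α : Type*} (v : Fin 4 → α) : q4 (v 0) (v 1) (v 2) (v 3) = v := by
  funext i; fin_cases i <;> rfl

lemma q4_ext {α : Type*} {a b c d : α} {v : Fin 4 → α}
    (h0 : v 0 = a) (h1 : v 1 = b) (h2 : v 2 = c) (h3 : v 3 = d) :
    v = q4 a b c d := by
  rw [← h0, ← h1, ← h2, ← h3, q4_eta]

lemma rcast {a b : ℤ} (h : a = b) : (a : ℝ) = (b : ℝ) := by exact_mod_cast h

noncomputable section

def sum4 (v : V4) : ℝ := v 0 + v 1 + v 2 + v 3
def nsq (v : V4) : ℝ := v 0 * v 0 + v 1 * v 1 + v 2 * v 2 + v 3 * v 3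

def Zb (v : V4) : Prop := ∀ j, ∃ m : ℤ, v j = (m : ℝ)
def Hb (v : V4) : Prop := ∀ j, ∃ m : ℤ, v j = (m : ℝ) + 1/2
def Es (v : V4) : Prop := ∃ m : ℤ, sum4 v = 2 * (m : ℝ)
def Os (v : V4) : Prop := ∃ m : ℤ, sum4 v = 2 * (m : ℝ) + 1

lemma Zb_intro {v : V4} (h0 : ∃ m : ℤ, v 0 = (m : ℝ)) (h1 : ∃ m : ℤ, v 1 = (m : ℝ))
    (h2 : ∃ m : ℤ, v 2 = (m : ℝ)) (h3 : ∃ m : ℤ, v 3 = (m : ℝ)) : Zb v := by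
  intro j; fin_cases j
  · exact h0
  · exact h1
  · exact h2
  · exact h3

lemma Hb_intro {v : V4} (h0 : ∃ m : ℤ, v 0 = (m : ℝ) + 1/2)
    (h1 : ∃ m : ℤ, v 1 = (m : ℝ) + 1/2) (h2 : ∃ m : ℤ, v 2 = (m : ℝ) + 1/2)
    (h3 : ∃ m : ℤ, v 3 = (m : ℝ) + 1/2) : Hb v := by
  intro j; fin_cases j
  · exact h0
  · exact h1
  · exact h2
  · exact h3

def Mm (v : V4) : V4 :=
  q4 ((v 0 + v 1 + v 2 + v 3)/2) ((v 0 + v 1 - v 2 - v 3)/2)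
     ((v 0 - v 1 + v 2 - v 3)/2) ((v 0 - v 1 - v 2 + v 3)/2)
def Fm (v : V4) : V4 := q4 (-(v 0)) (v 1) (v 2) (v 3)

@[simp] lemma Mm_0 (v : V4) : Mm v 0 = (v 0 + v 1 + v 2 + v 3)/2 := rfl
@[simp] lemma Mm_1 (v : V4) : Mm v 1 = (v 0 + v 1 - v 2 - v 3)/2 := rfl
@[simp] lemma Mm_2 (v : V4) : Mm v 2 = (v 0 - v 1 + v 2 - v 3)/2 := rfl
@[simp] lemma Mm_3 (v : V4) : Mm v 3 = (v 0 - v 1 - v 2 + v 3)/2 := rfl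
@[simp] lemma Fm_0 (v : V4) : Fm v 0 = -(v 0) := rfl
@[simp] lemma Fm_1 (v : V4) : Fm v 1 = v 1 := rfl
@[simp] lemma Fm_2 (v : V4) : Fm v 2 = v 2 := rfl
@[simp] lemma Fm_3 (v : V4) : Fm v 3 = v 3 := rfl

lemma Mm_Mm (v : V4) : Mm (Mm v) = v := by
  refine (q4_ext ?_ ?_ ?_ ?_).trans (q4_eta v) <;> simp <;> ring

lemma Fm_Fm (v : V4) : Fm (Fm v) = v := by
  refine (q4_ext ?_ ?_ ?_ ?_).trans (q4_eta v) <;> simp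

lemma nsq_Mm (v : V4) : nsq (Mm v) = nsq v := by
  simp only [nsq, Mm_0, Mm_1, Mm_2, Mm_3]; ring
lemma nsq_Fm (v : V4) : nsq (Fm v) = nsq v := by
  simp only [nsq, Fm_0, Fm_1, Fm_2, Fm_3]; ring
lemma sum4_Mm (v : V4) : sum4 (Mm v) = 2 * v 0 := by
  simp only [sum4, Mm_0, Mm_1, Mm_2, Mm_3]; ring
lemma sum4_Fm (v : V4) : sum4 (Fm v) = sum4 v - 2 * v 0 := by
  simp only [sum4, Fm_0, Fm_1, Fm_2, Fm_3]; ring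

lemma Zb_not_Hb {v : V4} (hz : Zb v) (hh : Hb v) : False := by
  obtain ⟨a, ha⟩ := hz 0
  obtain ⟨b, hb⟩ := hh 0
  have h1 : (2*a : ℝ) = 2*b + 1 := by rw [ha] at hb; push_cast; linarith
  have h2 : (2*a : ℤ) = 2*b + 1 := by exact_mod_cast h1
  omega

lemma not_Es_Os {v : V4} (he : Es v) (ho : Os v) : False := by
  obtain ⟨a, ha⟩ := he; obtain ⟨b, hb⟩ := ho
  have h1 : (2*a : ℝ) = 2*b + 1 := by rw [ha] at hb; linarith
  have h2 : (2*a : ℤ) = 2*b + 1 := by exact_mod_cast h1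
  omega

lemma Zb_es_or_os {v : V4} (hz : Zb v) : Es v ∨ Os v := by
  obtain ⟨a, ha⟩ := hz 0; obtain ⟨b, hb⟩ := hz 1
  obtain ⟨c, hc⟩ := hz 2; obtain ⟨d, hd⟩ := hz 3
  rcases Int.even_or_odd (a+b+c+d) with ⟨t, ht⟩ | ⟨t, ht⟩
  · left; refine ⟨t, ?_⟩
    have := rcast ht; push_cast at this
    simp only [sum4, ha, hb, hc, hd]; linarith
  · right; refine ⟨t, ?_⟩
    have := rcast ht; push_cast at this
    simp only [sum4, ha, hb, hc, hd]; linarith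

lemma Hb_es_or_os {v : V4} (hh : Hb v) : Es v ∨ Os v := by
  obtain ⟨a, ha⟩ := hh 0; obtain ⟨b, hb⟩ := hh 1
  obtain ⟨c, hc⟩ := hh 2; obtain ⟨d, hd⟩ := hh 3
  rcases Int.even_or_odd (a+b+c+d+2) with ⟨t, ht⟩ | ⟨t, ht⟩
  · left; refine ⟨t, ?_⟩
    have := rcast ht; push_cast at this
    simp only [sum4, ha, hb, hc, hd]; linarith
  · right; refine ⟨t, ?_⟩
    have := rcast ht; push_cast at this
    simp only [sum4, ha, hb, hc, hd]; linarith

lemma Fm_Hb {v : V4} (hh : Hb v) : Hb (Fm v) := by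
  obtain ⟨a, ha⟩ := hh 0
  refine Hb_intro ⟨-a-1, ?_⟩ (by simpa using hh 1) (by simpa using hh 2) (by simpa using hh 3)
  rw [Fm_0, ha]; push_cast; ring

lemma Fm_HE {v : V4} (hh : Hb v) (he : Es v) : Hb (Fm v) ∧ Os (Fm v) := by
  refine ⟨Fm_Hb hh, ?_⟩
  obtain ⟨a, ha⟩ := hh 0
  obtain ⟨s, hs⟩ := he
  exact ⟨s - a - 1, by rw [sum4_Fm, hs, ha]; push_cast; ring⟩

lemma Fm_HO {v : V4} (hh : Hb v) (ho : Os v) : Hb (Fm v) ∧ Es (Fm v) := by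
  refine ⟨Fm_Hb hh, ?_⟩
  obtain ⟨a, ha⟩ := hh 0
  obtain ⟨s, hs⟩ := ho
  exact ⟨s - a, by rw [sum4_Fm, hs, ha]; push_cast; ring⟩

lemma Mm_ZO {v : V4} (hz : Zb v) (ho : Os v) : Hb (Mm v) ∧ Es (Mm v) := by
  obtain ⟨a, ha⟩ := hz 0; obtain ⟨b, hb⟩ := hz 1
  obtain ⟨c, hc⟩ := hz 2; obtain ⟨d, hd⟩ := hz 3
  obtain ⟨s, hs⟩ := ho
  have hr : (a:ℝ) + b + c + d = 2*s + 1 := by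
    simp only [sum4, ha, hb, hc, hd] at hs; linarith
  constructor
  · refine Hb_intro ⟨s, ?_⟩ ⟨s - c - d, ?_⟩ ⟨s - b - d, ?_⟩ ⟨s - b - c, ?_⟩
    · rw [Mm_0, ha, hb, hc, hd]; push_cast; linarith
    · rw [Mm_1, ha, hb, hc, hd]; push_cast; linarith
    · rw [Mm_2, ha, hb, hc, hd]; push_cast; linarith
    · rw [Mm_3, ha, hb, hc, hd]; push_cast; linarith
  · exact ⟨a, by rw [sum4_Mm, ha]⟩

lemma Mm_HE {v : V4} (hh : Hb v) (he : Es v) : Zb (Mm v) ∧ Os (Mm v) := by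
  obtain ⟨a, ha⟩ := hh 0; obtain ⟨b, hb⟩ := hh 1
  obtain ⟨c, hc⟩ := hh 2; obtain ⟨d, hd⟩ := hh 3
  obtain ⟨s, hs⟩ := he
  have hr : (a:ℝ) + b + c + d = 2*s - 2 := by
    simp only [sum4, ha, hb, hc, hd] at hs; linarith
  constructor
  · refine Zb_intro ⟨s, ?_⟩ ⟨s - 1 - c - d, ?_⟩ ⟨s - 1 - b - d, ?_⟩ ⟨s - 1 - b - c, ?_⟩
    · rw [Mm_0, ha, hb, hc, hd]; push_cast; linarith
    · rw [Mm_1, ha, hb, hc, hd]; push_cast; linarith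
    · rw [Mm_2, ha, hb, hc, hd]; push_cast; linarith
    · rw [Mm_3, ha, hb, hc, hd]; push_cast; linarith
  · exact ⟨a, by rw [sum4_Mm, ha]; push_cast; ring⟩

end

-- MIDDLE LAYER (appended to blocks)
noncomputable section
open Classical

def Ev2 (u v : V4) : Prop := ∃ m : ℤ, sum4 u + sum4 v = 2 * (m : ℝ)
def Ev4 (y : Fin 4 → V4) : Prop :=
  ∃ m : ℤ, sum4 (y 0) + sum4 (y 1) + sum4 (y 2) + sum4 (y 3) = 2 * (m : ℝ)

def QA (y : Fin 4 → V4) : Prop :=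
  (((Zb (y 0) ∧ Zb (y 1)) ∨ (Hb (y 0) ∧ Hb (y 1))) ∧ Ev2 (y 0) (y 1)) ∧
  (((Zb (y 2) ∧ Zb (y 3)) ∨ (Hb (y 2) ∧ Hb (y 3))) ∧ Ev2 (y 2) (y 3))

def QB (y : Fin 4 → V4) : Prop :=
  ((∀ q, Zb (y q)) ∨ (∀ q, Hb (y q))) ∧ Ev4 y

def normQ (y : Fin 4 → V4) : ℝ := nsq (y 0) + nsq (y 1) + nsq (y 2) + nsq (y 3)

lemma normQ_q4 (a b c d : V4) : normQ (q4 a b c d) = nsq a + nsq b + nsq c + nsq d := rfl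

lemma no_int {a b : ℤ} (h : (2*a : ℝ) = 2*b + 1) : False := by
  have h2 : (2*a : ℤ) = 2*b + 1 := by exact_mod_cast h
  omega

lemma Ev2_ee {u v : V4} (hu : Es u) (hv : Es v) : Ev2 u v := by
  obtain ⟨a, ha⟩ := hu; obtain ⟨b, hb⟩ := hv
  exact ⟨a + b, by rw [ha, hb]; push_cast; ring⟩

lemma Ev2_oo {u v : V4} (hu : Os u) (hv : Os v) : Ev2 u v := by
  obtain ⟨a, ha⟩ := hu; obtain ⟨b, hb⟩ := hv
  exact ⟨a + b + 1, by rw [ha, hb]; push_cast; ring⟩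

lemma not_Ev2_oe {u v : V4} (hu : Os u) (hv : Es v) : ¬ Ev2 u v := by
  rintro ⟨m, hm⟩
  obtain ⟨a, ha⟩ := hu; obtain ⟨b, hb⟩ := hv
  exact no_int (a := m) (b := a + b) (by push_cast; linarith)

lemma not_Ev2_eo {u v : V4} (hu : Es u) (hv : Os v) : ¬ Ev2 u v := by
  rintro ⟨m, hm⟩
  obtain ⟨a, ha⟩ := hu; obtain ⟨b, hb⟩ := hv
  exact no_int (a := m) (b := a + b) (by push_cast; linarith)

lemma Es_of_Ev2 {u v : V4} (h : Ev2 u v) (hu : Es u) : Es v := by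
  obtain ⟨m, hm⟩ := h; obtain ⟨a, ha⟩ := hu
  exact ⟨m - a, by push_cast; linarith⟩

lemma Os_of_Ev2 {u v : V4} (h : Ev2 u v) (hu : Os u) : Os v := by
  obtain ⟨m, hm⟩ := h; obtain ⟨a, ha⟩ := hu
  exact ⟨m - a - 1, by push_cast; linarith⟩

lemma parity_partner_e {u v : V4} (hne : ¬ Ev2 u v) (hd : Es v ∨ Os v) (hu : Es u) :
    Os v := hd.resolve_left (fun he => hne (Ev2_ee hu he))

lemma parity_partner_o {u v : V4} (hne : ¬ Ev2 u v) (hd : Es v ∨ Os v) (hu : Os u) :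
    Es v := hd.resolve_right (fun ho => hne (Ev2_oo hu ho))

lemma pair_ZZ {u v : V4} (h : (Zb u ∧ Zb v) ∨ (Hb u ∧ Hb v)) (hu : Zb u) : Zb v :=
  h.elim And.right (fun hh => (Zb_not_Hb hu hh.1).elim)

lemma pair_HH {u v : V4} (h : (Zb u ∧ Zb v) ∨ (Hb u ∧ Hb v)) (hu : ¬ Zb u) :
    Hb u ∧ Hb v := h.resolve_left (fun hz => hu hz.1)

lemma allZ_q4 {a b c d : V4} (ha : Zb a) (hb : Zb b) (hc : Zb c) (hd : Zb d) :
    ∀ q, Zb (q4 a b c d q) := by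
  intro q; fin_cases q
  · exact ha
  · exact hb
  · exact hc
  · exact hd

lemma allH_q4 {a b c d : V4} (ha : Hb a) (hb : Hb b) (hc : Hb c) (hd : Hb d) :
    ∀ q, Hb (q4 a b c d q) := by
  intro q; fin_cases q
  · exact ha
  · exact hb
  · exact hc
  · exact hd

lemma QA_intro {A B C D : V4} (h1 : (Zb A ∧ Zb B) ∨ (Hb A ∧ Hb B)) (h2 : Ev2 A B)
    (h3 : (Zb C ∧ Zb D) ∨ (Hb C ∧ Hb D)) (h4 : Ev2 C D) : QA (q4 A B C D) :=
  ⟨⟨h1, h2⟩, ⟨h3, h4⟩⟩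

def phi (y : Fin 4 → V4) : Fin 4 → V4 :=
  if Zb (y 0) then
    if Zb (y 2) then y
    else
      if Es (y 0) then
        if Es (y 2) then q4 (Mm (y 2)) (y 0) (Mm (y 3)) (y 1)
        else q4 (Mm (Fm (y 2))) (y 0) (y 1) (Mm (Fm (y 3)))
      else
        if Es (y 2) then q4 (Fm (Mm (y 0))) (y 2) (Fm (Mm (y 1))) (y 3)
        else q4 (Fm (Mm (y 0))) (Fm (y 2)) (Fm (y 3)) (Fm (Mm (y 1)))
  else
    if Zb (y 2) then
      if Es (y 2) then
        if Es (y 0) then q4 (y 2) (Mm (y 0)) (Mm (y 1)) (y 3)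
        else q4 (y 2) (Mm (Fm (y 0))) (y 3) (Mm (Fm (y 1)))
      else
        if Es (y 0) then q4 (y 0) (Fm (Mm (y 2))) (Fm (Mm (y 3))) (y 1)
        else q4 (Fm (y 0)) (Fm (Mm (y 2))) (Fm (y 1)) (Fm (Mm (y 3)))
    else y

def psi (z : Fin 4 → V4) : Fin 4 → V4 :=
  if Ev2 (z 0) (z 1) then z
  else
    if Zb (z 0) then
      if Es (z 0) then
        if Es (z 2) then q4 (Fm (Mm (z 1))) (Fm (Mm (z 3))) (z 0) (z 2)
        else q4 (Mm (z 1)) (Mm (z 2)) (z 0) (z 3)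
      else
        if Es (z 2) then q4 (z 1) (z 2) (Fm (Mm (z 0))) (Fm (Mm (z 3)))
        else q4 (z 1) (z 3) (Mm (z 0)) (Mm (z 2))
    else
      if Es (z 0) then
        if Es (z 2) then q4 (Fm (z 0)) (Fm (z 2)) (Mm (Fm (z 1))) (Mm (Fm (z 3)))
        else q4 (z 0) (z 3) (Mm (Fm (z 1))) (Mm (Fm (z 2)))
      else
        if Es (z 2) then q4 (Mm (Fm (z 0))) (Mm (Fm (z 3))) (Fm (z 1)) (Fm (z 2))
        else q4 (Mm (Fm (z 0))) (Mm (Fm (z 2))) (z 1) (z 3)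

lemma normQ_phi (y : Fin 4 → V4) : normQ (phi y) = normQ y := by
  unfold phi
  split_ifs <;>
    simp only [normQ, q4_0, q4_1, q4_2, q4_3, nsq_Mm, nsq_Fm] <;> ring

lemma normQ_psi (z : Fin 4 → V4) : normQ (psi z) = normQ z := by
  unfold psi
  split_ifs <;>
    simp only [normQ, q4_0, q4_1, q4_2, q4_3, nsq_Mm, nsq_Fm] <;> ring
end

noncomputable section
open Classical

lemma Ev4_q4 {A B C D : V4}
    (h : ∃ m : ℤ, sum4 A + sum4 B + sum4 C + sum4 D = 2 * (m : ℝ)) :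
    Ev4 (q4 A B C D) := h

lemma sum_oeoe {A B C D : V4} (hA : Os A) (hB : Es B) (hC : Os C) (hD : Es D) :
    ∃ m : ℤ, sum4 A + sum4 B + sum4 C + sum4 D = 2 * (m : ℝ) := by
  obtain ⟨a, ha⟩ := hA; obtain ⟨b, hb⟩ := hB; obtain ⟨c, hc⟩ := hC; obtain ⟨d, hd⟩ := hD
  exact ⟨a + b + c + d + 1, by rw [ha, hb, hc, hd]; push_cast; ring⟩

lemma sum_oeeo {A B C D : V4} (hA : Os A) (hB : Es B) (hC : Es C) (hD : Os D) :
    ∃ m : ℤ, sum4 A + sum4 B + sum4 C + sum4 D = 2 * (m : ℝ) := by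
  obtain ⟨a, ha⟩ := hA; obtain ⟨b, hb⟩ := hB; obtain ⟨c, hc⟩ := hC; obtain ⟨d, hd⟩ := hD
  exact ⟨a + b + c + d + 1, by rw [ha, hb, hc, hd]; push_cast; ring⟩

lemma sum_eooe {A B C D : V4} (hA : Es A) (hB : Os B) (hC : Os C) (hD : Es D) :
    ∃ m : ℤ, sum4 A + sum4 B + sum4 C + sum4 D = 2 * (m : ℝ) := by
  obtain ⟨a, ha⟩ := hA; obtain ⟨b, hb⟩ := hB; obtain ⟨c, hc⟩ := hC; obtain ⟨d, hd⟩ := hD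
  exact ⟨a + b + c + d + 1, by rw [ha, hb, hc, hd]; push_cast; ring⟩

lemma sum_eoeo {A B C D : V4} (hA : Es A) (hB : Os B) (hC : Es C) (hD : Os D) :
    ∃ m : ℤ, sum4 A + sum4 B + sum4 C + sum4 D = 2 * (m : ℝ) := by
  obtain ⟨a, ha⟩ := hA; obtain ⟨b, hb⟩ := hB; obtain ⟨c, hc⟩ := hC; obtain ⟨d, hd⟩ := hD
  exact ⟨a + b + c + d + 1, by rw [ha, hb, hc, hd]; push_cast; ring⟩

lemma fourth_es_oeo {z : Fin 4 → V4} (h : Ev4 z) (h0 : Os (z 0)) (h1 : Es (z 1))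
    (h2 : Os (z 2)) (hd : Es (z 3) ∨ Os (z 3)) : Es (z 3) := by
  rcases hd with h3 | h3
  · exact h3
  · exfalso
    obtain ⟨m, hm⟩ := h; obtain ⟨a, ha⟩ := h0; obtain ⟨b, hb⟩ := h1
    obtain ⟨c, hc⟩ := h2; obtain ⟨d, hd'⟩ := h3
    exact no_int (a := m - a - b - c - d - 1) (b := 0) (by push_cast; linarith)

lemma fourth_os_eoe {z : Fin 4 → V4} (h : Ev4 z) (h0 : Es (z 0)) (h1 : Os (z 1))
    (h2 : Es (z 2)) (hd : Es (z 3) ∨ Os (z 3)) : Os (z 3) := by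
  rcases hd with h3 | h3
  · exfalso
    obtain ⟨m, hm⟩ := h; obtain ⟨a, ha⟩ := h0; obtain ⟨b, hb⟩ := h1
    obtain ⟨c, hc⟩ := h2; obtain ⟨d, hd'⟩ := h3
    exact no_int (a := m - a - b - c - d) (b := 0) (by push_cast; linarith)
  · exact h3

lemma fourth_es_eoo {z : Fin 4 → V4} (h : Ev4 z) (h0 : Es (z 0)) (h1 : Os (z 1))
    (h2 : Os (z 2)) (hd : Es (z 3) ∨ Os (z 3)) : Es (z 3) := by
  rcases hd with h3 | h3
  · exact h3
  · exfalso
    obtain ⟨m, hm⟩ := h; obtain ⟨a, ha⟩ := h0; obtain ⟨b, hb⟩ := h1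
    obtain ⟨c, hc⟩ := h2; obtain ⟨d, hd'⟩ := h3
    exact no_int (a := m - a - b - c - d - 1) (b := 0) (by push_cast; linarith)

lemma fourth_os_oee {z : Fin 4 → V4} (h : Ev4 z) (h0 : Os (z 0)) (h1 : Es (z 1))
    (h2 : Es (z 2)) (hd : Es (z 3) ∨ Os (z 3)) : Os (z 3) := by
  rcases hd with h3 | h3
  · exfalso
    obtain ⟨m, hm⟩ := h; obtain ⟨a, ha⟩ := h0; obtain ⟨b, hb⟩ := h1
    obtain ⟨c, hc⟩ := h2; obtain ⟨d, hd'⟩ := h3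
    exact no_int (a := m - a - b - c - d) (b := 0) (by push_cast; linarith)
  · exact h3

theorem phi_spec {y : Fin 4 → V4} (hy : QA y) : QB (phi y) ∧ psi (phi y) = y := by
  by_cases hZ0 : Zb (y 0)
  · by_cases hZ2 : Zb (y 2)
    · -- common, all integer blocks
      have hZ1 := pair_ZZ hy.1.1 hZ0
      have hZ3 := pair_ZZ hy.2.1 hZ2
      have hphi : phi y = y := by unfold phi; rw [if_pos hZ0, if_pos hZ2]
      rw [hphi]
      refine ⟨⟨Or.inl ?_, ?_⟩, ?_⟩
      · intro q; fin_cases q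
        · exact hZ0
        · exact hZ1
        · exact hZ2
        · exact hZ3
      · obtain ⟨m1, h1⟩ := hy.1.2; obtain ⟨m2, h2⟩ := hy.2.2
        exact ⟨m1 + m2, by push_cast; linarith⟩
      · unfold psi; rw [if_pos hy.1.2]
    · -- pair 1 integer, pair 2 half-integer
      have hZ1 := pair_ZZ hy.1.1 hZ0
      have hH23 := pair_HH hy.2.1 hZ2
      by_cases hE0 : Es (y 0)
      · have hE1 := Es_of_Ev2 hy.1.2 hE0
        by_cases hE2 : Es (y 2)
        · -- case S1
          have hE3 := Es_of_Ev2 hy.2.2 hE2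
          have hA := Mm_HE hH23.1 hE2
          have hC := Mm_HE hH23.2 hE3
          have hphi : phi y = q4 (Mm (y 2)) (y 0) (Mm (y 3)) (y 1) := by
            unfold phi; rw [if_pos hZ0, if_neg hZ2, if_pos hE0, if_pos hE2]
          rw [hphi]
          refine ⟨⟨Or.inl (allZ_q4 hA.1 hZ0 hC.1 hZ1),
            Ev4_q4 (sum_oeoe hA.2 hE0 hC.2 hE1)⟩, ?_⟩
          unfold psi
          rw [q4_0, q4_1, q4_2, q4_3]
          rw [if_neg (not_Ev2_oe hA.2 hE0), if_pos hA.1,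
            if_neg (fun h => not_Es_Os h hA.2), if_neg (fun h => not_Es_Os h hC.2)]
          simp only [Mm_Mm, Fm_Fm]
          exact q4_eta y
        · -- case S2
          have hO2 := (Hb_es_or_os hH23.1).resolve_left hE2
          have hO3 := Os_of_Ev2 hy.2.2 hO2
          have hFA := Fm_HO hH23.1 hO2
          have hA := Mm_HE hFA.1 hFA.2
          have hFD := Fm_HO hH23.2 hO3
          have hD := Mm_HE hFD.1 hFD.2
          have hphi : phi y = q4 (Mm (Fm (y 2))) (y 0) (y 1) (Mm (Fm (y 3))) := by
            unfold phi; rw [if_pos hZ0, if_neg hZ2, if_pos hE0, if_neg hE2]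
          rw [hphi]
          refine ⟨⟨Or.inl (allZ_q4 hA.1 hZ0 hZ1 hD.1),
            Ev4_q4 (sum_oeeo hA.2 hE0 hE1 hD.2)⟩, ?_⟩
          unfold psi
          rw [q4_0, q4_1, q4_2, q4_3]
          rw [if_neg (not_Ev2_oe hA.2 hE0), if_pos hA.1,
            if_neg (fun h => not_Es_Os h hA.2), if_pos hE1]
          simp only [Mm_Mm, Fm_Fm]
          exact q4_eta y
      · have hO0 := (Zb_es_or_os hZ0).resolve_left hE0
        have hO1 := Os_of_Ev2 hy.1.2 hO0
        by_cases hE2 : Es (y 2)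
        · -- case S3
          have hE3 := Es_of_Ev2 hy.2.2 hE2
          have hMA := Mm_ZO hZ0 hO0
          have hA := Fm_HE hMA.1 hMA.2
          have hMC := Mm_ZO hZ1 hO1
          have hC := Fm_HE hMC.1 hMC.2
          have hphi : phi y = q4 (Fm (Mm (y 0))) (y 2) (Fm (Mm (y 1))) (y 3) := by
            unfold phi; rw [if_pos hZ0, if_neg hZ2, if_neg hE0, if_pos hE2]
          rw [hphi]
          refine ⟨⟨Or.inr (allH_q4 hA.1 hH23.1 hC.1 hH23.2),
            Ev4_q4 (sum_oeoe hA.2 hE2 hC.2 hE3)⟩, ?_⟩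
          unfold psi
          rw [q4_0, q4_1, q4_2, q4_3]
          rw [if_neg (not_Ev2_oe hA.2 hE2), if_neg (fun h => Zb_not_Hb h hA.1),
            if_neg (fun h => not_Es_Os h hA.2), if_neg (fun h => not_Es_Os h hC.2)]
          simp only [Mm_Mm, Fm_Fm]
          exact q4_eta y
        · -- case S4
          have hO2 := (Hb_es_or_os hH23.1).resolve_left hE2
          have hO3 := Os_of_Ev2 hy.2.2 hO2
          have hMA := Mm_ZO hZ0 hO0
          have hA := Fm_HE hMA.1 hMA.2
          have hMD := Mm_ZO hZ1 hO1
          have hD := Fm_HE hMD.1 hMD.2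
          have hB := Fm_HO hH23.1 hO2
          have hC := Fm_HO hH23.2 hO3
          have hphi : phi y = q4 (Fm (Mm (y 0))) (Fm (y 2)) (Fm (y 3)) (Fm (Mm (y 1))) := by
            unfold phi; rw [if_pos hZ0, if_neg hZ2, if_neg hE0, if_neg hE2]
          rw [hphi]
          refine ⟨⟨Or.inr (allH_q4 hA.1 hB.1 hC.1 hD.1),
            Ev4_q4 (sum_oeeo hA.2 hB.2 hC.2 hD.2)⟩, ?_⟩
          unfold psi
          rw [q4_0, q4_1, q4_2, q4_3]
          rw [if_neg (not_Ev2_oe hA.2 hB.2), if_neg (fun h => Zb_not_Hb h hA.1),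
            if_neg (fun h => not_Es_Os h hA.2), if_pos hC.2]
          simp only [Mm_Mm, Fm_Fm]
          exact q4_eta y
  · by_cases hZ2 : Zb (y 2)
    · -- pair 1 half-integer, pair 2 integer
      have hH01 := pair_HH hy.1.1 hZ0
      have hZ3 := pair_ZZ hy.2.1 hZ2
      by_cases hE2 : Es (y 2)
      · have hE3 := Es_of_Ev2 hy.2.2 hE2
        by_cases hE0 : Es (y 0)
        · -- case S5
          have hE1 := Es_of_Ev2 hy.1.2 hE0
          have hB := Mm_HE hH01.1 hE0
          have hC := Mm_HE hH01.2 hE1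
          have hphi : phi y = q4 (y 2) (Mm (y 0)) (Mm (y 1)) (y 3) := by
            unfold phi; rw [if_neg hZ0, if_pos hZ2, if_pos hE2, if_pos hE0]
          rw [hphi]
          refine ⟨⟨Or.inl (allZ_q4 hZ2 hB.1 hC.1 hZ3),
            Ev4_q4 (sum_eooe hE2 hB.2 hC.2 hE3)⟩, ?_⟩
          unfold psi
          rw [q4_0, q4_1, q4_2, q4_3]
          rw [if_neg (not_Ev2_eo hE2 hB.2), if_pos hZ2, if_pos hE2,
            if_neg (fun h => not_Es_Os h hC.2)]
          simp only [Mm_Mm, Fm_Fm]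
          exact q4_eta y
        · -- case S7
          have hO0 := (Hb_es_or_os hH01.1).resolve_left hE0
          have hO1 := Os_of_Ev2 hy.1.2 hO0
          have hFB := Fm_HO hH01.1 hO0
          have hB := Mm_HE hFB.1 hFB.2
          have hFC := Fm_HO hH01.2 hO1
          have hC := Mm_HE hFC.1 hFC.2
          have hphi : phi y = q4 (y 2) (Mm (Fm (y 0))) (y 3) (Mm (Fm (y 1))) := by
            unfold phi; rw [if_neg hZ0, if_pos hZ2, if_pos hE2, if_neg hE0]
          rw [hphi]
          refine ⟨⟨Or.inl (allZ_q4 hZ2 hB.1 hZ3 hC.1),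
            Ev4_q4 (sum_eoeo hE2 hB.2 hE3 hC.2)⟩, ?_⟩
          unfold psi
          rw [q4_0, q4_1, q4_2, q4_3]
          rw [if_neg (not_Ev2_eo hE2 hB.2), if_pos hZ2, if_pos hE2, if_pos hE3]
          simp only [Mm_Mm, Fm_Fm]
          exact q4_eta y
      · have hO2 := (Zb_es_or_os hZ2).resolve_left hE2
        have hO3 := Os_of_Ev2 hy.2.2 hO2
        by_cases hE0 : Es (y 0)
        · -- case S6
          have hE1 := Es_of_Ev2 hy.1.2 hE0
          have hMB := Mm_ZO hZ2 hO2
          have hB := Fm_HE hMB.1 hMB.2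
          have hMC := Mm_ZO hZ3 hO3
          have hC := Fm_HE hMC.1 hMC.2
          have hphi : phi y = q4 (y 0) (Fm (Mm (y 2))) (Fm (Mm (y 3))) (y 1) := by
            unfold phi; rw [if_neg hZ0, if_pos hZ2, if_neg hE2, if_pos hE0]
          rw [hphi]
          refine ⟨⟨Or.inr (allH_q4 hH01.1 hB.1 hC.1 hH01.2),
            Ev4_q4 (sum_eooe hE0 hB.2 hC.2 hE1)⟩, ?_⟩
          unfold psi
          rw [q4_0, q4_1, q4_2, q4_3]
          rw [if_neg (not_Ev2_eo hE0 hB.2), if_neg (fun h => Zb_not_Hb h hH01.1),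
            if_pos hE0, if_neg (fun h => not_Es_Os h hC.2)]
          simp only [Mm_Mm, Fm_Fm]
          exact q4_eta y
        · -- case S8
          have hO0 := (Hb_es_or_os hH01.1).resolve_left hE0
          have hO1 := Os_of_Ev2 hy.1.2 hO0
          have hA := Fm_HO hH01.1 hO0
          have hC := Fm_HO hH01.2 hO1
          have hMB := Mm_ZO hZ2 hO2
          have hB := Fm_HE hMB.1 hMB.2
          have hMD := Mm_ZO hZ3 hO3
          have hD := Fm_HE hMD.1 hMD.2
          have hphi : phi y = q4 (Fm (y 0)) (Fm (Mm (y 2))) (Fm (y 1)) (Fm (Mm (y 3))) := by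
            unfold phi; rw [if_neg hZ0, if_pos hZ2, if_neg hE2, if_neg hE0]
          rw [hphi]
          refine ⟨⟨Or.inr (allH_q4 hA.1 hB.1 hC.1 hD.1),
            Ev4_q4 (sum_eoeo hA.2 hB.2 hC.2 hD.2)⟩, ?_⟩
          unfold psi
          rw [q4_0, q4_1, q4_2, q4_3]
          rw [if_neg (not_Ev2_eo hA.2 hB.2), if_neg (fun h => Zb_not_Hb h hA.1),
            if_pos hA.2, if_pos hC.2]
          simp only [Mm_Mm, Fm_Fm]
          exact q4_eta y
    · -- common, all half-integer blocks
      have hH01 := pair_HH hy.1.1 hZ0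
      have hH23 := pair_HH hy.2.1 hZ2
      have hphi : phi y = y := by unfold phi; rw [if_neg hZ0, if_neg hZ2]
      rw [hphi]
      refine ⟨⟨Or.inr ?_, ?_⟩, ?_⟩
      · intro q; fin_cases q
        · exact hH01.1
        · exact hH01.2
        · exact hH23.1
        · exact hH23.2
      · obtain ⟨m1, h1⟩ := hy.1.2; obtain ⟨m2, h2⟩ := hy.2.2
        exact ⟨m1 + m2, by push_cast; linarith⟩
      · unfold psi; rw [if_pos hy.1.2]
end

noncomputable section
open Classical

theorem psi_spec {z : Fin 4 → V4} (hz : QB z) : QA (psi z) ∧ phi (psi z) = z := by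
  by_cases hEv : Ev2 (z 0) (z 1)
  · -- common case
    have hpsi : psi z = z := by unfold psi; rw [if_pos hEv]
    rw [hpsi]
    have hEv23 : Ev2 (z 2) (z 3) := by
      obtain ⟨m, hm⟩ := hz.2; obtain ⟨a, ha⟩ := hEv
      exact ⟨m - a, by push_cast; linarith⟩
    refine ⟨⟨⟨?_, hEv⟩, ⟨?_, hEv23⟩⟩, ?_⟩
    · rcases hz.1 with h | h
      · exact Or.inl ⟨h 0, h 1⟩
      · exact Or.inr ⟨h 0, h 1⟩
    · rcases hz.1 with h | h
      · exact Or.inl ⟨h 2, h 3⟩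
      · exact Or.inr ⟨h 2, h 3⟩
    · rcases hz.1 with h | h
      · unfold phi; rw [if_pos (h 0), if_pos (h 2)]
      · unfold phi; rw [if_neg (fun hh => Zb_not_Hb hh (h 0)),
          if_neg (fun hh => Zb_not_Hb hh (h 2))]
  · by_cases hZ0 : Zb (z 0)
    · have hallZ : ∀ q, Zb (z q) := hz.1.resolve_right (fun hH => Zb_not_Hb hZ0 (hH 0))
      by_cases hE0 : Es (z 0)
      · have hO1 : Os (z 1) := parity_partner_e hEv (Zb_es_or_os (hallZ 1)) hE0
        by_cases hE2 : Es (z 2)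
        · -- case T4 -> S7
          have hO3 : Os (z 3) := fourth_os_eoe hz.2 hE0 hO1 hE2 (Zb_es_or_os (hallZ 3))
          have hMB := Mm_ZO (hallZ 1) hO1
          have hB := Fm_HE hMB.1 hMB.2
          have hMD := Mm_ZO (hallZ 3) hO3
          have hD := Fm_HE hMD.1 hMD.2
          have hpsi : psi z = q4 (Fm (Mm (z 1))) (Fm (Mm (z 3))) (z 0) (z 2) := by
            unfold psi; rw [if_neg hEv, if_pos hZ0, if_pos hE0, if_pos hE2]
          rw [hpsi]
          refine ⟨QA_intro (Or.inr ⟨hB.1, hD.1⟩) (Ev2_oo hB.2 hD.2)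
            (Or.inl ⟨hallZ 0, hallZ 2⟩) (Ev2_ee hE0 hE2), ?_⟩
          unfold phi
          rw [q4_0, q4_1, q4_2, q4_3]
          rw [if_neg (fun h => Zb_not_Hb h hB.1), if_pos (hallZ 0), if_pos hE0,
            if_neg (fun h => not_Es_Os h hB.2)]
          simp only [Fm_Fm, Mm_Mm]
          exact q4_eta z
        · -- case T3 -> S5
          have hO2 := (Zb_es_or_os (hallZ 2)).resolve_left hE2
          have hE3 : Es (z 3) := fourth_es_eoo hz.2 hE0 hO1 hO2 (Zb_es_or_os (hallZ 3))
          have hB := Mm_ZO (hallZ 1) hO1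
          have hC := Mm_ZO (hallZ 2) hO2
          have hpsi : psi z = q4 (Mm (z 1)) (Mm (z 2)) (z 0) (z 3) := by
            unfold psi; rw [if_neg hEv, if_pos hZ0, if_pos hE0, if_neg hE2]
          rw [hpsi]
          refine ⟨QA_intro (Or.inr ⟨hB.1, hC.1⟩) (Ev2_ee hB.2 hC.2)
            (Or.inl ⟨hallZ 0, hallZ 3⟩) (Ev2_ee hE0 hE3), ?_⟩
          unfold phi
          rw [q4_0, q4_1, q4_2, q4_3]
          rw [if_neg (fun h => Zb_not_Hb h hB.1), if_pos (hallZ 0), if_pos hE0,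
            if_pos hB.2]
          simp only [Fm_Fm, Mm_Mm]
          exact q4_eta z
      · have hO0 := (Zb_es_or_os hZ0).resolve_left hE0
        have hE1 : Es (z 1) := parity_partner_o hEv (Zb_es_or_os (hallZ 1)) hO0
        by_cases hE2 : Es (z 2)
        · -- case T2 -> S2
          have hO3 : Os (z 3) := fourth_os_oee hz.2 hO0 hE1 hE2 (Zb_es_or_os (hallZ 3))
          have hMA := Mm_ZO hZ0 hO0
          have hA := Fm_HE hMA.1 hMA.2
          have hMD := Mm_ZO (hallZ 3) hO3
          have hD := Fm_HE hMD.1 hMD.2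
          have hpsi : psi z = q4 (z 1) (z 2) (Fm (Mm (z 0))) (Fm (Mm (z 3))) := by
            unfold psi; rw [if_neg hEv, if_pos hZ0, if_neg hE0, if_pos hE2]
          rw [hpsi]
          refine ⟨QA_intro (Or.inl ⟨hallZ 1, hallZ 2⟩) (Ev2_ee hE1 hE2)
            (Or.inr ⟨hA.1, hD.1⟩) (Ev2_oo hA.2 hD.2), ?_⟩
          unfold phi
          rw [q4_0, q4_1, q4_2, q4_3]
          rw [if_pos (hallZ 1), if_neg (fun h => Zb_not_Hb h hA.1), if_pos hE1,
            if_neg (fun h => not_Es_Os h hA.2)]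
          simp only [Fm_Fm, Mm_Mm]
          exact q4_eta z
        · -- case T1 -> S1
          have hO2 := (Zb_es_or_os (hallZ 2)).resolve_left hE2
          have hE3 : Es (z 3) := fourth_es_oeo hz.2 hO0 hE1 hO2 (Zb_es_or_os (hallZ 3))
          have hC := Mm_ZO hZ0 hO0
          have hD := Mm_ZO (hallZ 2) hO2
          have hpsi : psi z = q4 (z 1) (z 3) (Mm (z 0)) (Mm (z 2)) := by
            unfold psi; rw [if_neg hEv, if_pos hZ0, if_neg hE0, if_neg hE2]
          rw [hpsi]
          refine ⟨QA_intro (Or.inl ⟨hallZ 1, hallZ 3⟩) (Ev2_ee hE1 hE3)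
            (Or.inr ⟨hC.1, hD.1⟩) (Ev2_ee hC.2 hD.2), ?_⟩
          unfold phi
          rw [q4_0, q4_1, q4_2, q4_3]
          rw [if_pos (hallZ 1), if_neg (fun h => Zb_not_Hb h hC.1), if_pos hE1,
            if_pos hC.2]
          simp only [Fm_Fm, Mm_Mm]
          exact q4_eta z
    · have hallH : ∀ q, Hb (z q) := hz.1.resolve_left (fun hZ => hZ0 (hZ 0))
      by_cases hE0 : Es (z 0)
      · have hO1 : Os (z 1) := parity_partner_e hEv (Hb_es_or_os (hallH 1)) hE0
        by_cases hE2 : Es (z 2)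
        · -- case T8 -> S8
          have hO3 : Os (z 3) := fourth_os_eoe hz.2 hE0 hO1 hE2 (Hb_es_or_os (hallH 3))
          have hA := Fm_HE (hallH 0) hE0
          have hC := Fm_HE (hallH 2) hE2
          have hFB := Fm_HO (hallH 1) hO1
          have hB := Mm_HE hFB.1 hFB.2
          have hFD := Fm_HO (hallH 3) hO3
          have hD := Mm_HE hFD.1 hFD.2
          have hpsi : psi z = q4 (Fm (z 0)) (Fm (z 2)) (Mm (Fm (z 1))) (Mm (Fm (z 3))) := by
            unfold psi; rw [if_neg hEv, if_neg hZ0, if_pos hE0, if_pos hE2]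
          rw [hpsi]
          refine ⟨QA_intro (Or.inr ⟨hA.1, hC.1⟩) (Ev2_oo hA.2 hC.2)
            (Or.inl ⟨hB.1, hD.1⟩) (Ev2_oo hB.2 hD.2), ?_⟩
          unfold phi
          rw [q4_0, q4_1, q4_2, q4_3]
          rw [if_neg (fun h => Zb_not_Hb h hA.1), if_pos hB.1,
            if_neg (fun h => not_Es_Os h hB.2), if_neg (fun h => not_Es_Os h hA.2)]
          simp only [Fm_Fm, Mm_Mm]
          exact q4_eta z
        · -- case T7 -> S6
          have hO2 := (Hb_es_or_os (hallH 2)).resolve_left hE2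
          have hE3 : Es (z 3) := fourth_es_eoo hz.2 hE0 hO1 hO2 (Hb_es_or_os (hallH 3))
          have hFB := Fm_HO (hallH 1) hO1
          have hB := Mm_HE hFB.1 hFB.2
          have hFC := Fm_HO (hallH 2) hO2
          have hC := Mm_HE hFC.1 hFC.2
          have hpsi : psi z = q4 (z 0) (z 3) (Mm (Fm (z 1))) (Mm (Fm (z 2))) := by
            unfold psi; rw [if_neg hEv, if_neg hZ0, if_pos hE0, if_neg hE2]
          rw [hpsi]
          refine ⟨QA_intro (Or.inr ⟨hallH 0, hallH 3⟩) (Ev2_ee hE0 hE3)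
            (Or.inl ⟨hB.1, hC.1⟩) (Ev2_oo hB.2 hC.2), ?_⟩
          unfold phi
          rw [q4_0, q4_1, q4_2, q4_3]
          rw [if_neg (fun h => Zb_not_Hb h (hallH 0)), if_pos hB.1,
            if_neg (fun h => not_Es_Os h hB.2), if_pos hE0]
          simp only [Fm_Fm, Mm_Mm]
          exact q4_eta z
      · have hO0 := (Hb_es_or_os (hallH 0)).resolve_left hE0
        have hE1 : Es (z 1) := parity_partner_o hEv (Hb_es_or_os (hallH 1)) hO0
        by_cases hE2 : Es (z 2)
        · -- case T6 -> S4
          have hO3 : Os (z 3) := fourth_os_oee hz.2 hO0 hE1 hE2 (Hb_es_or_os (hallH 3))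
          have hFA := Fm_HO (hallH 0) hO0
          have hA := Mm_HE hFA.1 hFA.2
          have hFD := Fm_HO (hallH 3) hO3
          have hD := Mm_HE hFD.1 hFD.2
          have hB := Fm_HE (hallH 1) hE1
          have hC := Fm_HE (hallH 2) hE2
          have hpsi : psi z = q4 (Mm (Fm (z 0))) (Mm (Fm (z 3))) (Fm (z 1)) (Fm (z 2)) := by
            unfold psi; rw [if_neg hEv, if_neg hZ0, if_neg hE0, if_pos hE2]
          rw [hpsi]
          refine ⟨QA_intro (Or.inl ⟨hA.1, hD.1⟩) (Ev2_oo hA.2 hD.2)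
            (Or.inr ⟨hB.1, hC.1⟩) (Ev2_oo hB.2 hC.2), ?_⟩
          unfold phi
          rw [q4_0, q4_1, q4_2, q4_3]
          rw [if_pos hA.1, if_neg (fun h => Zb_not_Hb h hB.1),
            if_neg (fun h => not_Es_Os h hA.2), if_neg (fun h => not_Es_Os h hB.2)]
          simp only [Fm_Fm, Mm_Mm]
          exact q4_eta z
        · -- case T5 -> S3
          have hO2 := (Hb_es_or_os (hallH 2)).resolve_left hE2
          have hE3 : Es (z 3) := fourth_es_oeo hz.2 hO0 hE1 hO2 (Hb_es_or_os (hallH 3))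
          have hFA := Fm_HO (hallH 0) hO0
          have hA := Mm_HE hFA.1 hFA.2
          have hFC := Fm_HO (hallH 2) hO2
          have hC := Mm_HE hFC.1 hFC.2
          have hpsi : psi z = q4 (Mm (Fm (z 0))) (Mm (Fm (z 2))) (z 1) (z 3) := by
            unfold psi; rw [if_neg hEv, if_neg hZ0, if_neg hE0, if_neg hE2]
          rw [hpsi]
          refine ⟨QA_intro (Or.inl ⟨hA.1, hC.1⟩) (Ev2_oo hA.2 hC.2)
            (Or.inr ⟨hallH 1, hallH 3⟩) (Ev2_ee hE1 hE3), ?_⟩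
          unfold phi
          rw [q4_0, q4_1, q4_2, q4_3]
          rw [if_pos hA.1, if_neg (fun h => Zb_not_Hb h (hallH 1)),
            if_neg (fun h => not_Es_Os h hA.2), if_pos hE1]
          simp only [Fm_Fm, Mm_Mm]
          exact q4_eta z

def midEquiv (c : ℝ) :
    {y : Fin 4 → V4 // QA y ∧ normQ y = c} ≃ {z : Fin 4 → V4 // QB z ∧ normQ z = c} where
  toFun := fun p => ⟨phi p.1, (phi_spec p.2.1).1, by rw [normQ_phi]; exact p.2.2⟩
  invFun := fun p => ⟨psi p.1, (psi_spec p.2.1).1, by rw [normQ_psi]; exact p.2.2⟩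
  left_inv := fun p => Subtype.ext (phi_spec p.2.1).2
  right_inv := fun p => Subtype.ext (psi_spec p.2.1).2

end

noncomputable section

def idx (q j : Fin 4) : Fin 16 := ⟨4 * q.val + j.val, by omega⟩

lemma idx_val (q j : Fin 4) : (idx q j).val = 4 * q.val + j.val := rfl

def toW (x : EuclideanSpace ℝ (Fin 16)) : Fin 4 → V4 := fun q j => x (idx q j)

def fromW (y : Fin 4 → V4) : EuclideanSpace ℝ (Fin 16) :=
  WithLp.toLp 2 (fun i : Fin 16 => y ⟨i.val / 4, by omega⟩ ⟨i.val % 4, by omega⟩)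

lemma toW_fromW (y : Fin 4 → V4) : toW (fromW y) = y := by
  funext q j
  rcases q with ⟨qv, hq⟩; rcases j with ⟨jv, hj⟩
  show y ⟨(4 * qv + jv) / 4, _⟩ ⟨(4 * qv + jv) % 4, _⟩ = y ⟨qv, hq⟩ ⟨jv, hj⟩
  have e1 : (4 * qv + jv) / 4 = qv := by omega
  have e2 : (4 * qv + jv) % 4 = jv := by omega
  simp only [e1, e2]

lemma fromW_toW (x : EuclideanSpace ℝ (Fin 16)) : fromW (toW x) = x := by
  ext i
  rcases i with ⟨iv, hi⟩
  show x ⟨4 * (iv / 4) + iv % 4, _⟩ = x ⟨iv, hi⟩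
  have e : 4 * (iv / 4) + iv % 4 = iv := by omega
  exact congrArg x (Fin.ext e)

def prodIdx : Fin 4 × Fin 4 ≃ Fin 16 where
  toFun p := idx p.1 p.2
  invFun i := (⟨i.val / 4, by omega⟩, ⟨i.val % 4, by omega⟩)
  left_inv p := by
    rcases p with ⟨⟨qv, hq⟩, ⟨jv, hj⟩⟩
    have e1 : (4 * qv + jv) / 4 = qv := by omega
    have e2 : (4 * qv + jv) % 4 = jv := by omega
    simp only [idx, Prod.mk.injEq]
    constructor <;> apply Fin.ext <;> simp [e1, e2]
  right_inv i := by
    rcases i with ⟨iv, hi⟩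
    apply Fin.ext
    simp only [idx]
    omega

lemma sum16 (f : Fin 16 → ℝ) : ∑ i, f i = ∑ q : Fin 4, ∑ j : Fin 4, f (idx q j) := by
  rw [← Equiv.sum_comp prodIdx f, Fintype.sum_prod_type]
  rfl

lemma forall_univ_iff (x : EuclideanSpace ℝ (Fin 16)) (P : ℝ → Prop) :
    (∀ i, P (x i)) ↔ ∀ q j, P (toW x q j) := by
  constructor
  · intro h q j; exact h (idx q j)
  · intro h i
    have := h ⟨i.val / 4, by omega⟩ ⟨i.val % 4, by omega⟩
    have heq : idx ⟨i.val / 4, by omega⟩ ⟨i.val % 4, by omega⟩ = i := by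
      apply Fin.ext; rw [idx_val]; simp; omega
    rwa [toW, heq] at this

lemma forall_lt8_iff (x : EuclideanSpace ℝ (Fin 16)) (P : ℝ → Prop) :
    (∀ i ∈ Finset.univ.filter (fun i : Fin 16 => (i : ℕ) < 8), P (x i)) ↔
      ((∀ j, P (toW x 0 j)) ∧ (∀ j, P (toW x 1 j))) := by
  constructor
  · intro h
    constructor <;> intro j
    · have hj := j.isLt
      have hmem : idx 0 j ∈ Finset.univ.filter (fun i : Fin 16 => (i : ℕ) < 8) := by
        simp only [Finset.mem_filter, Finset.mem_univ, true_and, idx_val]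
        simp only [show ((0 : Fin 4) : ℕ) = 0 from rfl]
        omega
      exact h (idx 0 j) hmem
    · have hj := j.isLt
      have hmem : idx 1 j ∈ Finset.univ.filter (fun i : Fin 16 => (i : ℕ) < 8) := by
        simp only [Finset.mem_filter, Finset.mem_univ, true_and, idx_val]
        simp only [show ((1 : Fin 4) : ℕ) = 1 from rfl]
        omega
      exact h (idx 1 j) hmem
  · rintro ⟨h0, h1⟩ i hi
    have hi8 : i.val < 8 := by simpa using hi
    rcases Nat.lt_or_ge i.val 4 with h | h
    · have := h0 ⟨i.val, by omega⟩
      have heq : idx 0 ⟨i.val, by omega⟩ = i := by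
        apply Fin.ext; rw [idx_val]; simp
      rwa [toW, heq] at this
    · have := h1 ⟨i.val - 4, by omega⟩
      have heq : idx 1 ⟨i.val - 4, by omega⟩ = i := by
        apply Fin.ext; rw [idx_val]; simp; omega
      rwa [toW, heq] at this

lemma forall_ge8_iff (x : EuclideanSpace ℝ (Fin 16)) (P : ℝ → Prop) :
    (∀ i ∈ Finset.univ.filter (fun i : Fin 16 => 8 ≤ (i : ℕ)), P (x i)) ↔
      ((∀ j, P (toW x 2 j)) ∧ (∀ j, P (toW x 3 j))) := by
  constructor
  · intro h
    constructor <;> intro j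
    · have hj := j.isLt
      have hmem : idx 2 j ∈ Finset.univ.filter (fun i : Fin 16 => 8 ≤ (i : ℕ)) := by
        simp only [Finset.mem_filter, Finset.mem_univ, true_and, idx_val]
        simp only [show ((2 : Fin 4) : ℕ) = 2 from rfl]
        omega
      exact h (idx 2 j) hmem
    · have hj := j.isLt
      have hmem : idx 3 j ∈ Finset.univ.filter (fun i : Fin 16 => 8 ≤ (i : ℕ)) := by
        simp only [Finset.mem_filter, Finset.mem_univ, true_and, idx_val]
        simp only [show ((3 : Fin 4) : ℕ) = 3 from rfl]
        omega
      exact h (idx 3 j) hmem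
  · rintro ⟨h2, h3⟩ i hi
    have hi8 : 8 ≤ i.val := by simpa using hi
    rcases Nat.lt_or_ge i.val 12 with h | h
    · have := h2 ⟨i.val - 8, by omega⟩
      have heq : idx 2 ⟨i.val - 8, by omega⟩ = i := by
        apply Fin.ext; rw [idx_val]; simp; omega
      rwa [toW, heq] at this
    · have := h3 ⟨i.val - 12, by omega⟩
      have heq : idx 3 ⟨i.val - 12, by omega⟩ = i := by
        apply Fin.ext; rw [idx_val]; simp; omega
      rwa [toW, heq] at this

lemma sum_lt8 (x : EuclideanSpace ℝ (Fin 16)) :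
    ∑ i ∈ Finset.univ.filter (fun i : Fin 16 => (i : ℕ) < 8), x i
      = sum4 (toW x 0) + sum4 (toW x 1) := by
  rw [Finset.sum_filter, sum16 (fun i => if (i : ℕ) < 8 then x i else 0)]
  simp only [Fin.sum_univ_four, idx_val, show ((0 : Fin 4) : ℕ) = 0 from rfl,
    show ((1 : Fin 4) : ℕ) = 1 from rfl, show ((2 : Fin 4) : ℕ) = 2 from rfl,
    show ((3 : Fin 4) : ℕ) = 3 from rfl]
  norm_num [sum4, toW, idx]
  rfl


lemma sum_ge8 (x : EuclideanSpace ℝ (Fin 16)) :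
    ∑ i ∈ Finset.univ.filter (fun i : Fin 16 => 8 ≤ (i : ℕ)), x i
      = sum4 (toW x 2) + sum4 (toW x 3) := by
  rw [Finset.sum_filter, sum16 (fun i => if 8 ≤ (i : ℕ) then x i else 0)]
  simp only [Fin.sum_univ_four, idx_val, show ((0 : Fin 4) : ℕ) = 0 from rfl,
    show ((1 : Fin 4) : ℕ) = 1 from rfl, show ((2 : Fin 4) : ℕ) = 2 from rfl,
    show ((3 : Fin 4) : ℕ) = 3 from rfl]
  norm_num [sum4, toW, idx]
  rfl


lemma sum_all (x : EuclideanSpace ℝ (Fin 16)) :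
    ∑ i, x i = sum4 (toW x 0) + sum4 (toW x 1) + sum4 (toW x 2) + sum4 (toW x 3) := by
  rw [sum16 x]
  simp only [Fin.sum_univ_four]
  norm_num [sum4, toW]

lemma norm_all (x : EuclideanSpace ℝ (Fin 16)) :
    ∑ i, x i * x i = normQ (toW x) := by
  rw [sum16 (fun i => x i * x i)]
  simp only [Fin.sum_univ_four]
  norm_num [normQ, nsq, toW]
end

noncomputable section

lemma memA_iff (x : EuclideanSpace ℝ (Fin 16)) : x ∈ E8E8Set ↔ QA (toW x) := by
  rw [E8E8Set]
  simp only [Set.mem_setOf_eq]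
  unfold IsE8Block QA
  apply and_congr
  · apply and_congr
    · exact or_congr (forall_lt8_iff x fun r => ∃ m : ℤ, r = (m : ℝ))
        (forall_lt8_iff x fun r => ∃ m : ℤ, r = (m : ℝ) + 1/2)
    · exact exists_congr fun m => by rw [sum_lt8]
  · apply and_congr
    · exact or_congr (forall_ge8_iff x fun r => ∃ m : ℤ, r = (m : ℝ))
        (forall_ge8_iff x fun r => ∃ m : ℤ, r = (m : ℝ) + 1/2)
    · exact exists_congr fun m => by rw [sum_ge8]

lemma memB_iff (x : EuclideanSpace ℝ (Fin 16)) : x ∈ E16Set ↔ QB (toW x) := by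
  rw [E16Set]
  simp only [Set.mem_setOf_eq]
  unfold QB
  apply and_congr
  · exact or_congr (forall_univ_iff x fun r => ∃ m : ℤ, r = (m : ℝ))
      (forall_univ_iff x fun r => ∃ m : ℤ, r = (m : ℝ) + 1/2)
  · exact exists_congr fun m => by rw [sum_all]

def AEquiv (c : ℝ) :
    {x : EuclideanSpace ℝ (Fin 16) // x ∈ E8E8Set ∧ ∑ i, x i * x i = c} ≃
      {y : Fin 4 → V4 // QA y ∧ normQ y = c} where
  toFun p := ⟨toW p.1, (memA_iff p.1).1 p.2.1, by rw [← norm_all]; exact p.2.2⟩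
  invFun p := ⟨fromW p.1,
    (memA_iff (fromW p.1)).2 (by rw [toW_fromW]; exact p.2.1),
    by rw [norm_all, toW_fromW]; exact p.2.2⟩
  left_inv p := Subtype.ext (fromW_toW p.1)
  right_inv p := Subtype.ext (toW_fromW p.1)

def BEquiv (c : ℝ) :
    {x : EuclideanSpace ℝ (Fin 16) // x ∈ E16Set ∧ ∑ i, x i * x i = c} ≃
      {z : Fin 4 → V4 // QB z ∧ normQ z = c} where
  toFun p := ⟨toW p.1, (memB_iff p.1).1 p.2.1, by rw [← norm_all]; exact p.2.2⟩
  invFun p := ⟨fromW p.1,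
    (memB_iff (fromW p.1)).2 (by rw [toW_fromW]; exact p.2.1),
    by rw [norm_all, toW_fromW]; exact p.2.2⟩
  left_inv p := Subtype.ext (fromW_toW p.1)
  right_inv p := Subtype.ext (toW_fromW p.1)

end

/-- Milnor's example: the even unimodular lattices `E₈ ⊕ E₈` and `E₁₆` in
`ℝ¹⁶` have the same theta series: for every even integer `2k`, the number of vectors of
norm `2k` in `E₈ ⊕ E₈` equals the number of vectors of norm `2k` in `E₁₆`. -/
theorem e8e8_e16_same_theta (k : ℕ) :
    Nat.card {x : EuclideanSpace ℝ (Fin 16) //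
        x ∈ E8E8Set ∧ ∑ i, x i * x i = 2 * (k : ℝ)}
      = Nat.card {x : EuclideanSpace ℝ (Fin 16) //
        x ∈ E16Set ∧ ∑ i, x i * x i = 2 * (k : ℝ)} := by
  exact Nat.card_congr
    ((AEquiv (2 * (k : ℝ))).trans ((midEquiv (2 * (k : ℝ))).trans (BEquiv (2 * (k : ℝ))).symm))
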